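/- Let W be the principal Lambert W function, g(r) = e^{-r/√2}(sin(r/√2) + cos(r/√2)), and λ₁(r) = r^{-2}·[W(e^{g(r)}) − g(r)]² for r > 0. Then λ₁ extends continuously to r = 0 with λ₁(0) = 0, and moreover λ₁(r) = r²/16 + O(r³) as r → 0⁺. -/

import Mathlib

open Real Filter

noncomputable def g1 (r : ℝ) : ℝ :=
  Real.exp (-(r / Real.sqrt 2)) * (Real.sin (r / Real.sqrt 2) + Real.cos (r / Real.sqrt 2))

lemma gaux {s : ℝ} (hspos : 0 < s) (hs1 : s ≤ 1/2) :
    |Real.exp (-s) * (Real.sin s + Real.cos s) - (1 - s^2)| ≤ 6 * s^3 := by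
  have habs : |(-s)| ≤ 1 := by rw [abs_neg, abs_of_pos hspos]; linarith
  have habs' : |s| ≤ 1 := by rw [abs_of_pos hspos]; linarith
  have hexp := Real.exp_bound habs (by norm_num : 0 < 3)
  have hexp' : |Real.exp (-s) - (1 - s + s^2/2)| ≤ s^3/2 := by
    have h1 : ∑ m ∈ Finset.range 3, (-s) ^ m / (m.factorial : ℝ) = 1 - s + s^2/2 := by
      simp [Finset.sum_range_succ]; ring
    rw [h1, abs_neg, abs_of_pos hspos] at hexp
    norm_num [Nat.factorial] at hexp
    nlinarith [pow_nonneg hspos.le 3]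
  have hsin : |Real.sin s - s| ≤ s^3 := by
    have h1 := Real.sin_lt hspos
    have h2 := Real.sin_gt_sub_cube hspos
    rw [abs_le]; constructor <;> nlinarith
  have hcos : |Real.cos s - (1 - s^2/2)| ≤ s^3 := by
    have h := Real.cos_bound habs'
    rw [abs_of_pos hspos] at h
    have h4 : s^4 * (5/96) ≤ s^3 := by
      nlinarith [mul_nonneg (by linarith : (0:ℝ) ≤ 96 - 5*s) (pow_nonneg hspos.le 3)]
    linarith
  have hB : |Real.sin s + Real.cos s| ≤ 2 := by
    calc |Real.sin s + Real.cos s| ≤ |Real.sin s| + |Real.cos s| := abs_add_le _ _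
      _ ≤ 2 := by
          have := Real.abs_sin_le_one s; have := Real.abs_cos_le_one s; linarith
  have hBQ : |(Real.sin s + Real.cos s) - (1 + s - s^2/2)| ≤ 2 * s^3 := by
    have he : (Real.sin s + Real.cos s) - (1 + s - s^2/2)
        = (Real.sin s - s) + (Real.cos s - (1 - s^2/2)) := by ring
    rw [he]
    calc |(Real.sin s - s) + (Real.cos s - (1 - s^2/2))|
        ≤ |Real.sin s - s| + |Real.cos s - (1 - s^2/2)| := abs_add_le _ _
      _ ≤ 2 * s^3 := by linarith
  have hP : |1 - s + s^2/2| ≤ 2 := by rw [abs_le]; constructor <;> nlinarith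
  have t1 : |(Real.exp (-s) - (1 - s + s^2/2)) * (Real.sin s + Real.cos s)| ≤ s^3 := by
    rw [abs_mul]
    calc |Real.exp (-s) - (1 - s + s^2/2)| * |Real.sin s + Real.cos s|
        ≤ s^3/2 * 2 := mul_le_mul hexp' hB (abs_nonneg _) (by positivity)
      _ = s^3 := by ring
  have t2 : |(1 - s + s^2/2) * ((Real.sin s + Real.cos s) - (1 + s - s^2/2))| ≤ 4 * s^3 := by
    rw [abs_mul]
    calc |1 - s + s^2/2| * |(Real.sin s + Real.cos s) - (1 + s - s^2/2)|
        ≤ 2 * (2 * s^3) := mul_le_mul hP hBQ (abs_nonneg _) (by norm_num)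
      _ = 4 * s^3 := by ring
  have t3 : |s^3 - s^4/4| ≤ s^3 := by
    have hs4 : s^4 ≤ s^3 := by
      nlinarith [mul_nonneg (by linarith : (0:ℝ) ≤ 1 - s) (pow_nonneg hspos.le 3)]
    rw [abs_le]; constructor
    · nlinarith [pow_nonneg hspos.le 3, pow_nonneg hspos.le 4]
    · nlinarith [pow_nonneg hspos.le 4]
  have hsplit : Real.exp (-s) * (Real.sin s + Real.cos s) - (1 - s^2)
      = (Real.exp (-s) - (1 - s + s^2/2)) * (Real.sin s + Real.cos s)
        + (1 - s + s^2/2) * ((Real.sin s + Real.cos s) - (1 + s - s^2/2))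
        + (s^3 - s^4/4) := by ring
  rw [hsplit]
  have a1 := abs_add_le ((Real.exp (-s) - (1 - s + s^2/2)) * (Real.sin s + Real.cos s)
      + (1 - s + s^2/2) * ((Real.sin s + Real.cos s) - (1 + s - s^2/2))) (s^3 - s^4/4)
  have a2 := abs_add_le ((Real.exp (-s) - (1 - s + s^2/2)) * (Real.sin s + Real.cos s))
      ((1 - s + s^2/2) * ((Real.sin s + Real.cos s) - (1 + s - s^2/2)))
  linarith

lemma gbound {r : ℝ} (hr0 : 0 < r) (hr1 : r ≤ 1/2) :
    |g1 r - (1 - r^2/2)| ≤ 6 * r^3 := by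
  have h2 : (1:ℝ) ≤ Real.sqrt 2 := by
    nlinarith [Real.sq_sqrt (by norm_num : (0:ℝ) ≤ 2), Real.sqrt_nonneg 2]
  have hspos : 0 < r / Real.sqrt 2 := div_pos hr0 (by linarith)
  have hsr : r / Real.sqrt 2 ≤ r := by
    rw [div_le_iff₀ (by linarith)]; nlinarith
  have hs2 : (r / Real.sqrt 2)^2 = r^2/2 := by
    rw [div_pow, Real.sq_sqrt (by norm_num : (0:ℝ) ≤ 2)]
  have key := gaux hspos (hsr.trans hr1)
  rw [hs2] at key
  have hcube : (r / Real.sqrt 2)^3 ≤ r^3 := by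
    have := pow_le_pow_left₀ hspos.le hsr 3
    linarith
  rw [g1]
  linarith [key]

lemma phimono {a b : ℝ} (_ha : 0 < a) (hb : 0 < b) (hab : a + Real.log a ≤ b + Real.log b) :
    a ≤ b := by
  by_contra hc
  push_neg at hc
  have := Real.log_lt_log hb hc
  linarith


set_option maxHeartbeats 1000000 in
lemma core {h g r : ℝ} (hr0 : 0 < r) (hr12 : r < 1/12) (hWpos : 0 < h)
    (hlog : Real.log h + h = g) (hg : |g - (1 - r^2/2)| ≤ 6 * r^3) :
    |(h - g) ^ 2 / r ^ 2 - r ^ 2 / 16| ≤ 4 * r ^ 3 := by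
  have hεb : |(g - 1) + r^2/2| ≤ 6 * r^3 := by
    have he : (g - 1) + r^2/2 = g - (1 - r^2/2) := by ring
    rw [he]; exact hg
  rw [abs_le] at hεb
  obtain ⟨hεb1, hεb2⟩ := hεb
  have hr3 : r^3 ≤ r^2 * (1/12) := by nlinarith
  have hr4 : r^4 ≤ r^3 * (1/12) := by nlinarith
  have hr2 : r^2 ≤ 1/144 := by nlinarith
  have hεneg : g - 1 < 0 := by
    nlinarith [mul_pos (by linarith : (0:ℝ) < 1/12 - r) (mul_pos hr0 hr0)]
  have hεlb : -(r^2) ≤ g - 1 := by nlinarith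
  have hupper : h ≤ 1 := by
    apply phimono hWpos one_pos
    rw [Real.log_one]
    linarith
  have hlower : g ≤ h := by
    have hgpos : 0 < g := by nlinarith
    apply phimono hgpos hWpos
    have hln : Real.log g ≤ 0 := Real.log_nonpos hgpos.le (by linarith)
    linarith
  obtain ⟨u, hu_def⟩ : ∃ u : ℝ, u = h - 1 := ⟨_, rfl⟩
  have hu1 : g - 1 ≤ u := by rw [hu_def]; linarith
  have hu2 : u ≤ 0 := by rw [hu_def]; linarith
  have hu_abs : |(-u)| < 1 := by
    rw [abs_neg, abs_lt]; constructor <;> nlinarith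
  have hLa : |Real.log (1 + u) - u| ≤ 2 * u^2 := by
    have hL := Real.abs_log_sub_add_sum_range_le hu_abs 1
    simp [Finset.sum_range_one] at hL
    have h6 : |u| ≤ 1/2 := by rw [abs_le]; constructor <;> nlinarith
    have h7 : (0:ℝ) < 1 - |u| := by linarith
    rw [show Real.log (1+u) - u = -u + Real.log (1+u) by ring]
    calc |-u + Real.log (1+u)| ≤ u^2 / (1 - |u|) := hL
      _ ≤ 2 * u^2 := by
          rw [div_le_iff₀ h7]
          nlinarith [sq_nonneg u, abs_nonneg u]
  have hlog2 : Real.log (1 + u) + u = g - 1 := by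
    have e : (1:ℝ) + u = h := by rw [hu_def]; ring
    rw [e]; linarith
  rw [abs_le] at hLa
  obtain ⟨hLa1, hLa2⟩ := hLa
  have hu4 : u^2 ≤ r^4 := by nlinarith
  have hD : h - g = u - (g - 1) := by rw [hu_def]; ring
  have hD1 : |(h - g) - r^2/4| ≤ 7/2 * r^3 := by
    rw [hD, abs_le]; constructor <;> nlinarith
  have hD2 : |(h - g) + r^2/4| ≤ r^2 := by
    rw [hD, abs_le]; constructor <;> nlinarith
  have hfin : |(h - g)^2 - r^4/16| ≤ 4 * r^5 := by
    have e : (h - g)^2 - r^4/16 = ((h - g) - r^2/4) * ((h - g) + r^2/4) := by ring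
    rw [e, abs_mul]
    calc |(h - g) - r^2/4| * |(h - g) + r^2/4|
        ≤ (7/2 * r^3) * r^2 := mul_le_mul hD1 hD2 (abs_nonneg _) (by positivity)
      _ ≤ 4 * r^5 := by nlinarith
  have er : (h - g)^2 / r^2 - r^2/16 = ((h - g)^2 - r^4/16) / r^2 := by
    field_simp
  rw [er, abs_div, abs_of_pos (by positivity : (0:ℝ) < r^2),
    div_le_iff₀ (by positivity : (0:ℝ) < r^2)]
  calc |(h - g)^2 - r^4/16| ≤ 4 * r^5 := hfin
    _ = 4 * r^3 * r^2 := by ring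

/-- With `λ₁(r) = r^{-2}[W(e^{g(r)}) − g(r)]²`, `λ₁` extends continuously to `0` with
value `0`, and `λ₁(r) = r²/16 + O(r³)` as `r → 0⁺`.
`W` is the principal Lambert function, characterized on `(0,∞)` by
`W(x) > 0` and `W(x)e^{W(x)} = x`. -/
theorem lambda1_asymptotics_zero
    (W : ℝ → ℝ) (hW : ∀ x : ℝ, 0 < x → 0 < W x ∧ W x * Real.exp (W x) = x) :
    Tendsto (fun r : ℝ => (W (Real.exp (g1 r)) - g1 r) ^ 2 / r ^ 2)
      (nhdsWithin 0 (Set.Ioi 0)) (nhds 0) ∧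
    ∃ C > (0:ℝ), ∃ δ > (0:ℝ), ∀ r : ℝ, 0 < r → r < δ →
      |(W (Real.exp (g1 r)) - g1 r) ^ 2 / r ^ 2 - r ^ 2 / 16| ≤ C * r ^ 3 := by
  have key : ∀ r : ℝ, 0 < r → r < 1/12 →
      |(W (Real.exp (g1 r)) - g1 r) ^ 2 / r ^ 2 - r ^ 2 / 16| ≤ 4 * r ^ 3 := by
    intro r hr0 hr12
    obtain ⟨hWpos, hWeq⟩ := hW (Real.exp (g1 r)) (Real.exp_pos _)
    have hlog : Real.log (W (Real.exp (g1 r))) + W (Real.exp (g1 r)) = g1 r := by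
      have hc := congrArg Real.log hWeq
      rwa [Real.log_mul hWpos.ne' (Real.exp_ne_zero _), Real.log_exp, Real.log_exp] at hc
    exact core hr0 hr12 hWpos hlog (gbound hr0 (by linarith : r ≤ 1/2))
  constructor
  · apply squeeze_zero' (f := fun r : ℝ => (W (Real.exp (g1 r)) - g1 r) ^ 2 / r ^ 2)
      (g := fun r : ℝ => r^2/16 + 4*r^3)
    · filter_upwards with r
      exact div_nonneg (sq_nonneg _) (sq_nonneg _)
    · filter_upwards [Ioo_mem_nhdsGT_of_mem (by norm_num : (0:ℝ) ∈ Set.Ico (0:ℝ) (1/12))]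
        with r hr
      obtain ⟨hr0, hr12⟩ := hr
      have hk := key r hr0 hr12
      rw [abs_le] at hk
      linarith [hk.2]
    · have hc : Continuous fun r : ℝ => r^2/16 + 4*r^3 := by continuity
      have ht := hc.tendsto 0
      norm_num at ht
      exact ht.mono_left nhdsWithin_le_nhds
  · exact ⟨4, by norm_num, 1/12, by norm_num, key⟩
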